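/- arXiv:1303.0615 — 2 statements merged into one kernel-verified Lean document; each statement's English description precedes it below -/
import Mathlib

section
/- (Theorem 4, upper bound for sums) Let f_i, g_j : [0,1] → R (i = 1, …, N; j = 1, …, M) be continuous functions whose graphs have box-counting dimensions (the defining limits exist), and let λ_i, μ_j : [0,1]² → R be bivariate Lipschitz functions. Define F : [0,1]² → R by F(x,y) = Σ_{i=1}^N λ_i(x,y) f_i(x) + Σ_{j=1}^M μ_j(x,y) g_j(y). Then the upper box-counting dimension of the graph of F satisfies dim̄_B Gr(F) ≤ 1 + max_{i,j} {dim_B Gr(f_i), dim_B Gr(g_j)}. -/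
open Set Filter Topology

/-- `N_δ(A)` for `A ⊆ ℝ²`: the number of `δ`-mesh squares that intersect `A`. -/
noncomputable def meshCount2 (δ : ℝ) (A : Set (ℝ × ℝ)) : ℕ :=
  Set.ncard {k : ℤ × ℤ |
    (A ∩ (Set.Ico ((k.1 : ℝ) * δ) (((k.1 : ℝ) + 1) * δ) ×ˢ
          Set.Ico ((k.2 : ℝ) * δ) (((k.2 : ℝ) + 1) * δ))).Nonempty}

/-- `N_δ(A)` for `A ⊆ ℝ³`: the number of `δ`-mesh cubes that intersect `A`. -/
noncomputable def meshCount3 (δ : ℝ) (A : Set (ℝ × ℝ × ℝ)) : ℕ :=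
  Set.ncard {k : ℤ × ℤ × ℤ |
    (A ∩ (Set.Ico ((k.1 : ℝ) * δ) (((k.1 : ℝ) + 1) * δ) ×ˢ
          (Set.Ico ((k.2.1 : ℝ) * δ) (((k.2.1 : ℝ) + 1) * δ) ×ˢ
           Set.Ico ((k.2.2 : ℝ) * δ) (((k.2.2 : ℝ) + 1) * δ)))).Nonempty}

/-- `A ⊆ ℝ²` has box-counting dimension `D`: the defining limit exists and equals `D`. -/
def HasBoxDim2 (A : Set (ℝ × ℝ)) (D : ℝ) : Prop :=
  Tendsto (fun δ : ℝ => Real.log (meshCount2 δ A) / (-Real.log δ)) (𝓝[>] 0) (𝓝 D)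

/-- `A ⊆ ℝ³` has box-counting dimension `D`: the defining limit exists and equals `D`. -/
def HasBoxDim3 (A : Set (ℝ × ℝ × ℝ)) (D : ℝ) : Prop :=
  Tendsto (fun δ : ℝ => Real.log (meshCount3 δ A) / (-Real.log δ)) (𝓝[>] 0) (𝓝 D)

/-- The graph of `f` over `[0,1]`. -/
def Gr1 (f : ℝ → ℝ) : Set (ℝ × ℝ) := {p | p.1 ∈ Set.Icc (0:ℝ) 1 ∧ p.2 = f p.1}

/-- The graph of `F : [0,1]² → ℝ`. -/
def Gr2 (F : ℝ → ℝ → ℝ) : Set (ℝ × ℝ × ℝ) :=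
  {p | p.1 ∈ Set.Icc (0:ℝ) 1 ∧ p.2.1 ∈ Set.Icc (0:ℝ) 1 ∧ p.2.2 = F p.1 p.2.1}



def fib2 (f : ℝ → ℝ) (δ : ℝ) (k : ℤ) : Set ℤ :=
  {m : ℤ | (Gr1 f ∩ (Set.Ico ((k:ℝ)*δ) (((k:ℝ)+1)*δ) ×ˢ
      Set.Ico ((m:ℝ)*δ) (((m:ℝ)+1)*δ))).Nonempty}

lemma mem_sq_iff {δ x : ℝ} (hδ : 0 < δ) {k : ℤ} :
    x ∈ Set.Ico ((k:ℝ)*δ) (((k:ℝ)+1)*δ) ↔ ⌊x / δ⌋ = k := by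
  rw [Int.floor_eq_iff, Set.mem_Ico, le_div_iff₀ hδ, div_lt_iff₀ hδ]

lemma fib2_subset {δ : ℝ} (hδ : 0 < δ) {f : ℝ → ℝ} {B : ℝ}
    (hB : ∀ x ∈ Set.Icc (0:ℝ) 1, |f x| ≤ B) (k : ℤ) :
    fib2 f δ k ⊆ Set.Icc ⌊(-B)/δ⌋ ⌊B/δ⌋ := by
  rintro m ⟨⟨x, y⟩, ⟨hx01, hy⟩, hx, hyI⟩
  have hm : ⌊f x / δ⌋ = m := by rw [← hy]; exact (mem_sq_iff hδ).mp hyI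
  have hb := hB x hx01
  rw [abs_le] at hb
  subst hm
  exact ⟨Int.floor_le_floor (div_le_div_of_nonneg_right hb.1 hδ.le),
    Int.floor_le_floor (div_le_div_of_nonneg_right hb.2 hδ.le)⟩

lemma fib2_finite {δ : ℝ} (hδ : 0 < δ) {f : ℝ → ℝ} {B : ℝ}
    (hB : ∀ x ∈ Set.Icc (0:ℝ) 1, |f x| ≤ B) (k : ℤ) : (fib2 f δ k).Finite :=
  (Set.finite_Icc _ _).subset (fib2_subset hδ hB k)

lemma col_lemma {δ : ℝ} (hδ : 0 < δ) {f : ℝ → ℝ} {B : ℝ}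
    (hf : ContinuousOn f (Set.Icc 0 1))
    (hB : ∀ x ∈ Set.Icc (0:ℝ) 1, |f x| ≤ B) (k : ℤ) :
    ∃ w : ℝ, 0 ≤ w ∧ ((0:ℝ) ≤ (k:ℝ) * δ → (k:ℝ) * δ ≤ 1 →
      ((∀ x ∈ Set.Icc (0:ℝ) 1 ∩ Set.Ico ((k:ℝ)*δ) (((k:ℝ)+1)*δ),
        ∀ x' ∈ Set.Icc (0:ℝ) 1 ∩ Set.Ico ((k:ℝ)*δ) (((k:ℝ)+1)*δ), |f x - f x'| ≤ w) ∧
       w ≤ δ * (fib2 f δ k).ncard ∧ 1 ≤ (fib2 f δ k).ncard)) := by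
  by_cases h0 : (0:ℝ) ≤ (k:ℝ) * δ ∧ (k:ℝ) * δ ≤ 1
  swap
  · exact ⟨0, le_refl 0, fun h1 h2 => absurd ⟨h1, h2⟩ h0⟩
  obtain ⟨hk0, hk1⟩ := h0
  have hfin : (fib2 f δ k).Finite := fib2_finite hδ hB k
  set a : ℝ := (k:ℝ) * δ with ha
  set e : ℝ := min (((k:ℝ)+1)*δ) 1 with he
  have hae : a ≤ e := le_min (by nlinarith) hk1
  have hJsub : Set.Icc a e ⊆ Set.Icc (0:ℝ) 1 :=
    fun x hx => ⟨le_trans hk0 hx.1, le_trans hx.2 (min_le_right _ _)⟩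
  have hfc : ContinuousOn f (Set.Icc a e) := hf.mono hJsub
  obtain ⟨u, huJ, hu⟩ := isCompact_Icc.exists_isMaxOn (Set.nonempty_Icc.mpr hae) hfc
  obtain ⟨v, hvJ, hv⟩ := isCompact_Icc.exists_isMinOn (Set.nonempty_Icc.mpr hae) hfc
  -- the column set
  set C : Set ℝ := Set.Icc (0:ℝ) 1 ∩ Set.Ico ((k:ℝ)*δ) (((k:ℝ)+1)*δ) with hC
  have hCsub : C ⊆ Set.Icc a e := by
    rintro x ⟨⟨h01, h11⟩, hxa, hxb⟩
    exact ⟨hxa, le_min hxb.le h11⟩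
  have haC : a ∈ C := ⟨⟨hk0, hk1⟩, le_refl a, by nlinarith⟩
  have hCcl : Set.Icc a e ⊆ closure C := by
    rcases eq_or_lt_of_le hae with h | h
    · rw [← h]
      simp only [Set.Icc_self]
      exact fun x hx => subset_closure (by rw [Set.mem_singleton_iff.mp hx]; exact haC)
    · have h1 : Set.Ico a e ⊆ C := by
        rintro x ⟨hx1, hx2⟩
        have hxe1 : x < 1 ∨ x ≤ 1 := Or.inr (le_trans hx2.le (min_le_right _ _))
        exact ⟨⟨le_trans hk0 hx1, le_trans hx2.le (min_le_right _ _)⟩, hx1,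
          lt_of_lt_of_le hx2 (min_le_left _ _)⟩
      calc Set.Icc a e = closure (Set.Ico a e) := (closure_Ico h.ne).symm
        _ ⊆ closure C := closure_mono h1
  -- ordConnected column
  have hOC : Set.OrdConnected C := (Set.ordConnected_Icc).inter (Set.ordConnected_Ico)
  have hCsub01 : C ⊆ Set.Icc (0:ℝ) 1 := fun x hx => hx.1
  -- key: any two points of C give lower bound on ncard
  have hkey : ∀ s ∈ C, ∀ t ∈ C, f s - f t ≤ δ * (fib2 f δ k).ncard := by
    intro s hs t ht
    rcases le_or_gt (f s) (f t) with hst | hst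
    · have : (0:ℝ) ≤ δ * (fib2 f δ k).ncard := by positivity
      linarith
    · -- Finset.Icc ⌊f t/δ⌋ ⌊f s/δ⌋ ⊆ fib2
      have hsub : (↑(Finset.Icc ⌊f t/δ⌋ ⌊f s/δ⌋) : Set ℤ) ⊆ fib2 f δ k := by
        intro m hm
        simp only [Finset.coe_Icc, Set.mem_Icc] at hm
        set y : ℝ := max ((m:ℝ)*δ) (f t) with hy
        have hyI : y ∈ Set.Ico ((m:ℝ)*δ) (((m:ℝ)+1)*δ) := by
          constructor
          · exact le_max_left _ _
          · apply max_lt (by nlinarith)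
            calc f t < (⌊f t/δ⌋ + 1) * δ := by
                  have := Int.lt_floor_add_one (f t / δ)
                  rw [div_lt_iff₀ hδ] at this; linarith [this]
              _ ≤ ((m:ℝ)+1)*δ := by
                  have : ((⌊f t/δ⌋:ℝ)) ≤ (m:ℝ) := by exact_mod_cast hm.1
                  nlinarith
        have hyIcc : y ∈ Set.Icc (f t) (f s) := by
          constructor
          · exact le_max_right _ _
          · apply max_le ?_ hst.le
            have : ((m:ℝ)) ≤ f s / δ := by
              have h2 : ((m:ℝ)) ≤ ((⌊f s/δ⌋:ℤ):ℝ) := by exact_mod_cast hm.2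
              exact le_trans h2 (Int.floor_le _)
            exact (le_div_iff₀ hδ).mp this
        -- IVT
        have huIcc : Set.uIcc t s ⊆ C := hOC.uIcc_subset ht hs
        have hIVT := intermediate_value_uIcc (hf.mono (huIcc.trans hCsub01))
        have hyIn : y ∈ Set.uIcc (f t) (f s) := by
          rw [Set.uIcc_of_le hst.le]
          exact hyIcc
        obtain ⟨x, hxI, hfx⟩ := hIVT hyIn
        exact ⟨(x, y), ⟨hCsub01 (huIcc hxI), hfx.symm⟩, (huIcc hxI).2, hyI⟩
      have hcard : (Finset.Icc ⌊f t/δ⌋ ⌊f s/δ⌋).card ≤ (fib2 f δ k).ncard := by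
        rw [← Set.ncard_coe_finset]
        exact Set.ncard_le_ncard hsub hfin
      have hfloor : ⌊f t/δ⌋ ≤ ⌊f s/δ⌋ := Int.floor_le_floor
        (div_le_div_of_nonneg_right hst.le hδ.le)
      have h1 : ((Finset.Icc ⌊f t/δ⌋ ⌊f s/δ⌋).card : ℝ) = (⌊f s/δ⌋ : ℝ) - ⌊f t/δ⌋ + 1 := by
        have hc : ((Finset.Icc ⌊f t/δ⌋ ⌊f s/δ⌋).card : ℤ) = ⌊f s/δ⌋ + 1 - ⌊f t/δ⌋ := by
          rw [Int.card_Icc]; omega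
        have := congrArg (fun z : ℤ => (z : ℝ)) hc
        push_cast at this
        linarith
      have h2 : (f s - f t)/δ ≤ ((Finset.Icc ⌊f t/δ⌋ ⌊f s/δ⌋).card : ℝ) := by
        rw [h1]
        have l1 : (⌊f s/δ⌋ : ℝ) > f s / δ - 1 := by linarith [Int.lt_floor_add_one (f s/δ)]
        have l2 : (⌊f t/δ⌋ : ℝ) ≤ f t / δ := Int.floor_le _
        have : (f s - f t)/δ = f s/δ - f t/δ := by ring
        linarith
      have : (f s - f t)/δ ≤ ((fib2 f δ k).ncard : ℝ) := le_trans h2 (by exact_mod_cast hcard)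
      rw [div_le_iff₀ hδ] at this
      linarith
  have hball : ∀ z ∈ Set.Icc a e, ∀ ε > (0:ℝ), ∃ z' ∈ C, |f z' - f z| < ε := by
    intro z hz ε hε
    have hcw : ContinuousWithinAt f (Set.Icc a e) z := hfc z hz
    have hev : ∀ᶠ x in 𝓝[Set.Icc a e] z, |f x - f z| < ε := by
      filter_upwards [hcw (Metric.ball_mem_nhds (f z) hε)] with x hx
      simpa [Real.dist_eq] using hx
    have hne : (𝓝[C] z).NeBot := mem_closure_iff_nhdsWithin_neBot.mp (hCcl hz)
    have hev2 : ∀ᶠ x in 𝓝[C] z, |f x - f z| < ε :=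
      (nhdsWithin_mono z hCsub) hev
    obtain ⟨x, hx1, hx2⟩ := (hev2.and eventually_mem_nhdsWithin).exists
    exact ⟨x, hx2, hx1⟩
  have hu' := isMaxOn_iff.mp hu
  have hv' := isMinOn_iff.mp hv
  refine ⟨f u - f v, by linarith [hv' u huJ], fun _ _ => ⟨?_, ?_, ?_⟩⟩
  · intro x hx x' hx'
    rw [abs_sub_le_iff]
    exact ⟨by linarith [hu' x (hCsub hx), hv' x' (hCsub hx')],
      by linarith [hu' x' (hCsub hx'), hv' x (hCsub hx)]⟩
  · refine le_of_forall_pos_le_add ?_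
    intro ε hε
    obtain ⟨u', hu'C, hu'⟩ := hball u huJ (ε/2) (by positivity)
    obtain ⟨v', hv'C, hv'⟩ := hball v hvJ (ε/2) (by positivity)
    have hk2 := hkey u' hu'C v' hv'C
    rw [abs_lt] at hu' hv'
    linarith [hu'.1, hu'.2, hv'.1, hv'.2]
  · have hne : (fib2 f δ k).Nonempty :=
      ⟨⌊f a/δ⌋, ⟨(a, f a), ⟨⟨hk0, hk1⟩, rfl⟩, haC.2, (mem_sq_iff hδ).mpr rfl⟩⟩
    exact (Set.ncard_pos hfin).mpr hne


lemma S2_finite {δ : ℝ} (hδ : 0 < δ) {f : ℝ → ℝ} {B : ℝ}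
    (hB : ∀ x ∈ Set.Icc (0:ℝ) 1, |f x| ≤ B) :
    {k : ℤ × ℤ |
    (Gr1 f ∩ (Set.Ico ((k.1 : ℝ) * δ) (((k.1 : ℝ) + 1) * δ) ×ˢ
          Set.Ico ((k.2 : ℝ) * δ) (((k.2 : ℝ) + 1) * δ))).Nonempty}.Finite := by
  apply Set.Finite.subset ((Set.finite_Icc (0:ℤ) ⌊1/δ⌋).prod (Set.finite_Icc ⌊(-B)/δ⌋ ⌊B/δ⌋))
  rintro ⟨k₁, k₂⟩ ⟨⟨x, y⟩, ⟨hx01, hy⟩, hx, hyI⟩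
  have hk1 : ⌊x / δ⌋ = k₁ := (mem_sq_iff hδ).mp hx
  have hk2 : k₂ ∈ fib2 f δ k₁ := ⟨(x, y), ⟨hx01, hy⟩, hx, hyI⟩
  refine ⟨⟨?_, ?_⟩, fib2_subset hδ hB k₁ hk2⟩
  · rw [← hk1]
    exact Int.floor_nonneg.mpr (div_nonneg (le_trans hx01.1 (le_refl x)) hδ.le)
  · rw [← hk1]
    exact Int.floor_le_floor (div_le_div_of_nonneg_right hx01.2 hδ.le)

lemma sum2_le {δ : ℝ} (hδ : 0 < δ) {f : ℝ → ℝ} {B : ℝ}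
    (hB : ∀ x ∈ Set.Icc (0:ℝ) 1, |f x| ≤ B) :
    ∑ k ∈ Finset.Icc (0:ℤ) ⌊1/δ⌋, (fib2 f δ k).ncard ≤ meshCount2 δ (Gr1 f) := by
  classical
  set T : Finset (ℤ × ℤ) :=
    (Finset.Icc (0:ℤ) ⌊1/δ⌋).biUnion
      (fun k => {k} ×ˢ (fib2_finite hδ hB k).toFinset) with hT
  have hTcard : T.card = ∑ k ∈ Finset.Icc (0:ℤ) ⌊1/δ⌋, (fib2 f δ k).ncard := by
    rw [hT, Finset.card_biUnion]
    · refine Finset.sum_congr rfl fun k _ => ?_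
      rw [Finset.card_product, Finset.card_singleton, one_mul,
        Set.ncard_eq_toFinset_card _ (fib2_finite hδ hB k)]
    · intro k _ k' _ hkk'
      rw [Function.onFun, Finset.disjoint_left]
      rintro ⟨a, b⟩ ha hb
      simp only [Finset.mem_product, Finset.mem_singleton] at ha hb
      exact hkk' (ha.1 ▸ hb.1 ▸ rfl)
  have hsub : (↑T : Set (ℤ × ℤ)) ⊆ {k : ℤ × ℤ |
      (Gr1 f ∩ (Set.Ico ((k.1 : ℝ) * δ) (((k.1 : ℝ) + 1) * δ) ×ˢ
            Set.Ico ((k.2 : ℝ) * δ) (((k.2 : ℝ) + 1) * δ))).Nonempty} := by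
    rintro ⟨k₁, k₂⟩ hk
    simp only [hT, Finset.coe_biUnion, Set.mem_iUnion, Finset.mem_coe,
      Finset.mem_product, Finset.mem_singleton, Set.Finite.mem_toFinset] at hk
    obtain ⟨k, _, hk1, hk2⟩ := hk
    subst hk1
    exact hk2
  calc ∑ k ∈ Finset.Icc (0:ℤ) ⌊1/δ⌋, (fib2 f δ k).ncard = T.card := hTcard.symm
    _ = (↑T : Set (ℤ × ℤ)).ncard := (Set.ncard_coe_finset T).symm
    _ ≤ _ := Set.ncard_le_ncard hsub (S2_finite hδ hB)




-- helper: bound for |lam p| on the unit square, from Lipschitz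
lemma lip_bound {lam : ℝ × ℝ → ℝ} {K : NNReal}
    (h : LipschitzOnWith K lam (Set.Icc 0 1 ×ˢ Set.Icc 0 1)) :
    ∀ p ∈ Set.Icc (0:ℝ) 1 ×ˢ Set.Icc (0:ℝ) 1, |lam p| ≤ |lam (0,0)| + K := by
  intro p hp
  have h00 : ((0:ℝ), (0:ℝ)) ∈ Set.Icc (0:ℝ) 1 ×ˢ Set.Icc (0:ℝ) 1 := by
    constructor <;> exact ⟨le_refl 0, zero_le_one⟩
  have hd := h.dist_le_mul p hp (0,0) h00
  have hdist : dist p ((0:ℝ), (0:ℝ)) ≤ 1 := by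
    rw [Prod.dist_eq]
    apply max_le <;> · rw [Real.dist_eq, sub_zero, abs_of_nonneg] <;>
      first | exact hp.1.2 | exact hp.2.2 | exact hp.1.1 | exact hp.2.1
  rw [Real.dist_eq] at hd
  have : |lam p - lam (0,0)| ≤ (K:ℝ) := le_trans hd (by nlinarith [K.coe_nonneg])
  calc |lam p| ≤ |lam p - lam (0,0)| + |lam (0,0)| := by
        have := abs_sub_abs_le_abs_sub (lam p) (lam (0,0)); linarith [abs_nonneg (lam (0,0)), abs_sub_le (lam p) (lam (0,0)) 0]
    _ ≤ |lam (0,0)| + K := by linarith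

lemma mc2_lb {δ : ℝ} (hδ0 : 0 < δ) (hδ1 : δ < 1) {f : ℝ → ℝ} {B : ℝ}
    (hf : ContinuousOn f (Set.Icc 0 1)) (hB : ∀ x ∈ Set.Icc (0:ℝ) 1, |f x| ≤ B) :
    (1:ℝ)/δ ≤ (meshCount2 δ (Gr1 f) : ℝ) := by
  have hsum := sum2_le hδ0 hB
  have hcard : (Finset.Icc (0:ℤ) ⌊1/δ⌋).card ≤
      ∑ k ∈ Finset.Icc (0:ℤ) ⌊1/δ⌋, (fib2 f δ k).ncard := by
    rw [Finset.card_eq_sum_ones]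
    refine Finset.sum_le_sum fun k hk => ?_
    simp only [Finset.mem_Icc] at hk
    obtain ⟨w, hw0, himp⟩ := col_lemma hδ0 hf hB k
    have hk1 : (0:ℝ) ≤ (k:ℝ) * δ := mul_nonneg (by exact_mod_cast hk.1) hδ0.le
    have hk2 : (k:ℝ) * δ ≤ 1 := by
      have : (k:ℝ) ≤ 1/δ := le_trans (by exact_mod_cast hk.2) (Int.floor_le _)
      calc (k:ℝ) * δ ≤ (1/δ) * δ := by nlinarith
        _ = 1 := by field_simp
    exact (himp hk1 hk2).2.2
  have hA : (1:ℝ)/δ ≤ ((Finset.Icc (0:ℤ) ⌊1/δ⌋).card : ℝ) := by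
    rw [Int.card_Icc]
    have h0 : (0:ℤ) ≤ ⌊1/δ⌋ := Int.floor_nonneg.mpr (by positivity)
    have : ((⌊1/δ⌋ + 1 - 0).toNat : ℝ) = ((⌊1/δ⌋:ℝ) + 1) := by
      have h1 : (⌊1/δ⌋ + 1 - 0).toNat = (⌊1/δ⌋ + 1).toNat := by omega
      rw [h1]
      have h2 : ((⌊1/δ⌋ + 1).toNat : ℤ) = ⌊1/δ⌋ + 1 := Int.toNat_of_nonneg (by omega)
      exact_mod_cast congrArg (fun z : ℤ => (z:ℝ)) h2
    rw [this]
    linarith [Int.lt_floor_add_one (1/δ)]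
  calc (1:ℝ)/δ ≤ ((Finset.Icc (0:ℤ) ⌊1/δ⌋).card : ℝ) := hA
    _ ≤ _ := by exact_mod_cast le_trans hcard hsum

lemma cardA_eq {δ : ℝ} (hδ0 : 0 < δ) :
    ((Finset.Icc (0:ℤ) ⌊1/δ⌋).card : ℝ) = (⌊1/δ⌋:ℝ) + 1 := by
  rw [Int.card_Icc]
  have h0 : (0:ℤ) ≤ ⌊1/δ⌋ := Int.floor_nonneg.mpr (by positivity)
  have h1 : (⌊1/δ⌋ + 1 - 0).toNat = (⌊1/δ⌋ + 1).toNat := by omega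
  rw [h1]
  have h2 : ((⌊1/δ⌋ + 1).toNat : ℤ) = ⌊1/δ⌋ + 1 := Int.toNat_of_nonneg (by omega)
  exact_mod_cast congrArg (fun z : ℤ => (z:ℝ)) h2

set_option maxHeartbeats 2000000 in
/-- **Theorem 4 (upper bound for sums).** For continuous `f_i, g_j : [0,1] → ℝ` with
box-counting dimensional graphs and bivariate Lipschitz `λ_i, μ_j : [0,1]² → ℝ`, the upper
box-counting dimension of the graph of
`F(x,y) = Σ λ_i(x,y)f_i(x) + Σ μ_j(x,y)g_j(y)` is at most
`1 + max_{i,j}{dim_B Gr(f_i), dim_B Gr(g_j)}`. -/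
theorem stmt16 (N M : ℕ) (hN : 0 < N) (hM : 0 < M)
    (f : Fin N → ℝ → ℝ) (g : Fin M → ℝ → ℝ)
    (lam : Fin N → ℝ × ℝ → ℝ) (mu : Fin M → ℝ × ℝ → ℝ)
    (hf : ∀ i, ContinuousOn (f i) (Icc 0 1)) (hg : ∀ j, ContinuousOn (g j) (Icc 0 1))
    (hliplam : ∀ i, ∃ K : NNReal, LipschitzOnWith K (lam i) (Icc 0 1 ×ˢ Icc 0 1))
    (hlipmu : ∀ j, ∃ K : NNReal, LipschitzOnWith K (mu j) (Icc 0 1 ×ˢ Icc 0 1))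
    (Df : Fin N → ℝ) (Dg : Fin M → ℝ)
    (hDf : ∀ i, HasBoxDim2 (Gr1 (f i)) (Df i))
    (hDg : ∀ j, HasBoxDim2 (Gr1 (g j)) (Dg j)) :
    limsup (fun δ : ℝ =>
        Real.log (meshCount3 δ
          (Gr2 fun x y => (∑ i, lam i (x, y) * f i x) + ∑ j, mu j (x, y) * g j y)) /
          (-Real.log δ))
      (𝓝[>] 0) ≤ 1 + max (⨆ i, Df i) (⨆ j, Dg j) := by
  classical
  have hNe : Nonempty (Fin N) := ⟨⟨0, hN⟩⟩
  have hMe : Nonempty (Fin M) := ⟨⟨0, hM⟩⟩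
  choose L hL using hliplam
  choose L' hL' using hlipmu
  -- bounds on f i, g j
  have hBf' : ∀ i, ∃ B:ℝ, 0 ≤ B ∧ ∀ x ∈ Set.Icc (0:ℝ) 1, |f i x| ≤ B := by
    intro i
    obtain ⟨C, hC⟩ := isCompact_Icc.exists_bound_of_continuousOn (hf i)
    exact ⟨max C 0, le_max_right _ _, fun x hx =>
      le_trans (by simpa [Real.norm_eq_abs] using hC x hx) (le_max_left _ _)⟩
  choose Bf hBf0 hBf using hBf'
  have hBg' : ∀ j, ∃ B:ℝ, 0 ≤ B ∧ ∀ x ∈ Set.Icc (0:ℝ) 1, |g j x| ≤ B := by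
    intro j
    obtain ⟨C, hC⟩ := isCompact_Icc.exists_bound_of_continuousOn (hg j)
    exact ⟨max C 0, le_max_right _ _, fun x hx =>
      le_trans (by simpa [Real.norm_eq_abs] using hC x hx) (le_max_left _ _)⟩
  choose Bg hBg0 hBg using hBg'
  -- bounds on lam i, mu j
  set Cl : Fin N → ℝ := fun i => |lam i (0,0)| + L i with hCldef
  set Cm : Fin M → ℝ := fun j => |mu j (0,0)| + L' j with hCmdef
  have hCl0 : ∀ i, 0 ≤ Cl i := fun i => add_nonneg (abs_nonneg _) (L i).coe_nonneg
  have hCm0 : ∀ j, 0 ≤ Cm j := fun j => add_nonneg (abs_nonneg _) (L' j).coe_nonneg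
  have hCl : ∀ i, ∀ p ∈ Set.Icc (0:ℝ) 1 ×ˢ Set.Icc (0:ℝ) 1, |lam i p| ≤ Cl i :=
    fun i => lip_bound (hL i)
  have hCm : ∀ j, ∀ p ∈ Set.Icc (0:ℝ) 1 ×ˢ Set.Icc (0:ℝ) 1, |mu j p| ≤ Cm j :=
    fun j => lip_bound (hL' j)
  set D : ℝ := max (⨆ i, Df i) (⨆ j, Dg j) with hDdef
  have hDfD : ∀ i, Df i ≤ D := fun i =>
    le_trans (le_ciSup (Set.Finite.bddAbove (Set.finite_range Df)) i) (le_max_left _ _)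
  have hDgD : ∀ j, Dg j ≤ D := fun j =>
    le_trans (le_ciSup (Set.Finite.bddAbove (Set.finite_range Dg)) j) (le_max_right _ _)
  set G : ℝ := (∑ i, 2 * L i * Bf i) + (∑ j, 2 * L' j * Bg j) + 2 with hGdef
  set Ct : ℝ := (∑ i, 2 * Cl i) + (∑ j, 2 * Cm j) with hCtdef
  have hG2 : 2 ≤ G := by
    have h1 : (0:ℝ) ≤ ∑ i, 2 * L i * Bf i :=
      Finset.sum_nonneg fun i _ => mul_nonneg (by positivity) (hBf0 i)
    have h2 : (0:ℝ) ≤ ∑ j, 2 * L' j * Bg j :=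
      Finset.sum_nonneg fun j _ => mul_nonneg (by positivity) (hBg0 j)
    simp only [hGdef]; linarith
  have hCt0 : 0 ≤ Ct := by
    have h1 : (0:ℝ) ≤ ∑ i, 2 * Cl i := Finset.sum_nonneg fun i _ => by linarith [hCl0 i]
    have h2 : (0:ℝ) ≤ ∑ j, 2 * Cm j := Finset.sum_nonneg fun j _ => by linarith [hCm0 j]
    simp only [hCtdef]; linarith
  set K : ℝ := 2 * (2*G + Ct) with hKdef
  have hK8 : 8 ≤ K := by simp only [hKdef]; linarith
  -- lower bound on meshCount2
  have hmc2_lb : ∀ δ:ℝ, 0 < δ → δ < 1 → ∀ i, (1:ℝ)/δ ≤ (meshCount2 δ (Gr1 (f i)) : ℝ) :=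
    fun δ h0 h1 i => mc2_lb h0 h1 (hf i) (hBf i)
  have hmc2g_lb : ∀ δ:ℝ, 0 < δ → δ < 1 → ∀ j, (1:ℝ)/δ ≤ (meshCount2 δ (Gr1 (g j)) : ℝ) :=
    fun δ h0 h1 j => mc2_lb h0 h1 (hg j) (hBg j)
  -- D ≥ 1
  have hD1 : (1:ℝ) ≤ D := by
    set i0 : Fin N := ⟨0, hN⟩
    refine le_trans ?_ (hDfD i0)
    refine ge_of_tendsto (hDf i0) ?_
    filter_upwards [Ioo_mem_nhdsGT_of_mem (Set.left_mem_Ico.mpr one_pos)] with δ hδ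
    have hlog : 0 < -Real.log δ := by
      have := Real.log_neg hδ.1 hδ.2; linarith
    rw [le_div_iff₀ hlog, one_mul]
    have h1 := hmc2_lb δ hδ.1 hδ.2 i0
    calc -Real.log δ = Real.log (1/δ) := by
          rw [one_div, Real.log_inv]
      _ ≤ Real.log _ := Real.log_le_log (one_div_pos.mpr hδ.1) h1
  set F : ℝ → ℝ → ℝ := fun x y => (∑ i, lam i (x, y) * f i x) + ∑ j, mu j (x, y) * g j y
    with hFdef
  refine le_of_forall_pos_le_add fun ε hε => ?_
  set ε' : ℝ := ε/2 with hε'def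
  have hε' : 0 < ε' := by positivity
  have E1 : Set.Ioo (0:ℝ) 1 ∈ 𝓝[>] (0:ℝ) :=
    Ioo_mem_nhdsGT_of_mem (Set.left_mem_Ico.mpr one_pos)
  have E2 : ∀ᶠ δ in 𝓝[>] (0:ℝ), ∀ i,
      Real.log (meshCount2 δ (Gr1 (f i))) / (-Real.log δ) ≤ D + ε' :=
    eventually_all.mpr fun i => (hDf i).eventually_le_const (by linarith [hDfD i])
  have E3 : ∀ᶠ δ in 𝓝[>] (0:ℝ), ∀ j,
      Real.log (meshCount2 δ (Gr1 (g j))) / (-Real.log δ) ≤ D + ε' :=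
    eventually_all.mpr fun j => (hDg j).eventually_le_const (by linarith [hDgD j])
  have htop : Tendsto (fun δ:ℝ => -Real.log δ) (𝓝[>] (0:ℝ)) atTop :=
    tendsto_neg_atBot_atTop.comp Real.tendsto_log_nhdsGT_zero
  have E4 : ∀ᶠ δ in 𝓝[>] (0:ℝ), Real.log K ≤ ε' * (-Real.log δ) := by
    filter_upwards [htop.eventually_ge_atTop (Real.log K / ε')] with δ h
    rw [div_le_iff₀ hε'] at h
    linarith
  have hcore : ∀ᶠ δ in 𝓝[>] (0:ℝ),
      Real.log (meshCount3 δ (Gr2 F)) / (-Real.log δ) ≤ 1 + D + ε := by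
    filter_upwards [E1, E2, E3, E4] with δ hδIoo hE2 hE3 hE4
    obtain ⟨hδ0, hδ1⟩ := hδIoo
    have hlog : 0 < -Real.log δ := by
      have := Real.log_neg hδ0 hδ1; linarith
    set P : ℝ := Real.exp ((D + ε') * (-Real.log δ)) with hPdef
    have hDε1 : 1 ≤ D + ε' := by linarith
    have hP1 : (1:ℝ) ≤ P := Real.one_le_exp (by nlinarith)
    have hmc2P : ∀ i, (meshCount2 δ (Gr1 (f i)) : ℝ) ≤ P := by
      intro i
      have h2 := hE2 i
      rw [div_le_iff₀ hlog] at h2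
      have hpos : (0:ℝ) < (meshCount2 δ (Gr1 (f i)) : ℝ) :=
        lt_of_lt_of_le (by positivity) (hmc2_lb δ hδ0 hδ1 i)
      calc (meshCount2 δ (Gr1 (f i)) : ℝ)
          = Real.exp (Real.log (meshCount2 δ (Gr1 (f i)))) := (Real.exp_log hpos).symm
        _ ≤ P := Real.exp_le_exp.mpr h2
    have hmc2Pg : ∀ j, (meshCount2 δ (Gr1 (g j)) : ℝ) ≤ P := by
      intro j
      have h2 := hE3 j
      rw [div_le_iff₀ hlog] at h2
      have hpos : (0:ℝ) < (meshCount2 δ (Gr1 (g j)) : ℝ) :=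
        lt_of_lt_of_le (by positivity) (hmc2g_lb δ hδ0 hδ1 j)
      calc (meshCount2 δ (Gr1 (g j)) : ℝ)
          = Real.exp (Real.log (meshCount2 δ (Gr1 (g j)))) := (Real.exp_log hpos).symm
        _ ≤ P := Real.exp_le_exp.mpr h2
    -- the column index set
    set A : Finset ℤ := Finset.Icc (0:ℤ) ⌊1/δ⌋ with hAdef
    have hAmem : ∀ k ∈ A, (0:ℝ) ≤ (k:ℝ)*δ ∧ (k:ℝ)*δ ≤ 1 := by
      intro k hk
      simp only [hAdef, Finset.mem_Icc] at hk
      constructor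
      · exact mul_nonneg (by exact_mod_cast hk.1) hδ0.le
      · have : (k:ℝ) ≤ 1/δ := le_trans (by exact_mod_cast hk.2) (Int.floor_le _)
        calc (k:ℝ) * δ ≤ (1/δ) * δ := by nlinarith
          _ = 1 := by field_simp
    -- per-column oscillation data
    choose wf hwf0 hwfP using fun (i : Fin N) (k : ℤ) => col_lemma hδ0 (hf i) (hBf i) k
    choose wg hwg0 hwgP using fun (j : Fin M) (k : ℤ) => col_lemma hδ0 (hg j) (hBg j) k
    set nf : Fin N → ℤ → ℝ := fun i k => ((fib2 (f i) δ k).ncard : ℝ) with hnfdef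
    set ng : Fin M → ℤ → ℝ := fun j k => ((fib2 (g j) δ k).ncard : ℝ) with hngdef
    set z0 : ℤ × ℤ → ℝ := fun p => F ((p.1:ℝ)*δ) ((p.2:ℝ)*δ) with hz0def
    set W : ℤ × ℤ → ℝ := fun p => (∑ i, (L i * δ * Bf i + Cl i * wf i p.1)) +
      (∑ j, (L' j * δ * Bg j + Cm j * wg j p.2)) with hWdef
    have hW0 : ∀ p : ℤ × ℤ, 0 ≤ W p := by
      intro p
      apply add_nonneg <;> apply Finset.sum_nonneg <;> intro t _
      · have := hwf0 t p.1
        have := hBf0 t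
        have := hCl0 t
        positivity
      · have := hwg0 t p.2
        have := hBg0 t
        have := hCm0 t
        positivity
    -- oscillation bound for F on a mesh square
    have hosc : ∀ (k₁ k₂ : ℤ), k₁ ∈ A → k₂ ∈ A → ∀ x y x' y' : ℝ,
        x ∈ Set.Icc (0:ℝ) 1 ∩ Set.Ico ((k₁:ℝ)*δ) (((k₁:ℝ)+1)*δ) →
        y ∈ Set.Icc (0:ℝ) 1 ∩ Set.Ico ((k₂:ℝ)*δ) (((k₂:ℝ)+1)*δ) →
        x' ∈ Set.Icc (0:ℝ) 1 ∩ Set.Ico ((k₁:ℝ)*δ) (((k₁:ℝ)+1)*δ) →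
        y' ∈ Set.Icc (0:ℝ) 1 ∩ Set.Ico ((k₂:ℝ)*δ) (((k₂:ℝ)+1)*δ) →
        |F x y - F x' y'| ≤ W (k₁, k₂) := by
      intro k₁ k₂ hk₁ hk₂ x y x' y' hx hy hx' hy'
      obtain ⟨hA11, hA12⟩ := hAmem k₁ hk₁
      obtain ⟨hA21, hA22⟩ := hAmem k₂ hk₂
      have hxy01 : ((x:ℝ), y) ∈ Set.Icc (0:ℝ) 1 ×ˢ Set.Icc (0:ℝ) 1 := ⟨hx.1, hy.1⟩
      have hxy'01 : ((x':ℝ), y') ∈ Set.Icc (0:ℝ) 1 ×ˢ Set.Icc (0:ℝ) 1 := ⟨hx'.1, hy'.1⟩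
      have hdxy : dist ((x:ℝ), y) ((x':ℝ), y') ≤ δ := by
        rw [Prod.dist_eq]
        apply max_le <;> rw [Real.dist_eq] <;> rw [abs_sub_le_iff] <;> constructor
        · linarith [hx.2.1, hx.2.2, hx'.2.1, hx'.2.2]
        · linarith [hx.2.1, hx.2.2, hx'.2.1, hx'.2.2]
        · linarith [hy.2.1, hy.2.2, hy'.2.1, hy'.2.2]
        · linarith [hy.2.1, hy.2.2, hy'.2.1, hy'.2.2]
      have hterm1 : ∀ i : Fin N, |lam i (x,y) * f i x - lam i (x',y') * f i x'| ≤
          L i * δ * Bf i + Cl i * wf i k₁ := by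
        intro i
        have e : lam i (x,y) * f i x - lam i (x',y') * f i x' =
            (lam i (x,y) - lam i (x',y')) * f i x + lam i (x',y') * (f i x - f i x') := by
          ring
        have h1 : |lam i (x,y) - lam i (x',y')| ≤ L i * δ := by
          have hd := (hL i).dist_le_mul (x,y) hxy01 (x',y') hxy'01
          rw [Real.dist_eq] at hd
          calc |lam i (x,y) - lam i (x',y')| ≤ (L i : ℝ) * dist ((x:ℝ),y) ((x':ℝ),y') := hd
            _ ≤ L i * δ := mul_le_mul_of_nonneg_left hdxy (L i).coe_nonneg
        have h2 : |f i x| ≤ Bf i := hBf i x hx.1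
        have h3 : |lam i (x',y')| ≤ Cl i := hCl i _ hxy'01
        have h4 : |f i x - f i x'| ≤ wf i k₁ := (hwfP i k₁ hA11 hA12).1 x hx x' hx'
        calc |lam i (x,y) * f i x - lam i (x',y') * f i x'|
            = |(lam i (x,y) - lam i (x',y')) * f i x + lam i (x',y') * (f i x - f i x')| := by
              rw [e]
          _ ≤ |(lam i (x,y) - lam i (x',y')) * f i x| + |lam i (x',y') * (f i x - f i x')| :=
              abs_add_le _ _
          _ = |lam i (x,y) - lam i (x',y')| * |f i x| + |lam i (x',y')| * |f i x - f i x'| := by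
              rw [abs_mul, abs_mul]
          _ ≤ (L i * δ) * Bf i + Cl i * wf i k₁ :=
              add_le_add (mul_le_mul h1 h2 (abs_nonneg _) (by positivity))
                (mul_le_mul h3 h4 (abs_nonneg _) (hCl0 i))
          _ = L i * δ * Bf i + Cl i * wf i k₁ := by ring
      have hterm2 : ∀ j : Fin M, |mu j (x,y) * g j y - mu j (x',y') * g j y'| ≤
          L' j * δ * Bg j + Cm j * wg j k₂ := by
        intro j
        have e : mu j (x,y) * g j y - mu j (x',y') * g j y' =
            (mu j (x,y) - mu j (x',y')) * g j y + mu j (x',y') * (g j y - g j y') := by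
          ring
        have h1 : |mu j (x,y) - mu j (x',y')| ≤ L' j * δ := by
          have hd := (hL' j).dist_le_mul (x,y) hxy01 (x',y') hxy'01
          rw [Real.dist_eq] at hd
          calc |mu j (x,y) - mu j (x',y')| ≤ (L' j : ℝ) * dist ((x:ℝ),y) ((x':ℝ),y') := hd
            _ ≤ L' j * δ := mul_le_mul_of_nonneg_left hdxy (L' j).coe_nonneg
        have h2 : |g j y| ≤ Bg j := hBg j y hy.1
        have h3 : |mu j (x',y')| ≤ Cm j := hCm j _ hxy'01
        have h4 : |g j y - g j y'| ≤ wg j k₂ := (hwgP j k₂ hA21 hA22).1 y hy y' hy'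
        calc |mu j (x,y) * g j y - mu j (x',y') * g j y'|
            = |(mu j (x,y) - mu j (x',y')) * g j y + mu j (x',y') * (g j y - g j y')| := by
              rw [e]
          _ ≤ |(mu j (x,y) - mu j (x',y')) * g j y| + |mu j (x',y') * (g j y - g j y')| :=
              abs_add_le _ _
          _ = |mu j (x,y) - mu j (x',y')| * |g j y| + |mu j (x',y')| * |g j y - g j y'| := by
              rw [abs_mul, abs_mul]
          _ ≤ (L' j * δ) * Bg j + Cm j * wg j k₂ :=
              add_le_add (mul_le_mul h1 h2 (abs_nonneg _) (by positivity))
                (mul_le_mul h3 h4 (abs_nonneg _) (hCm0 j))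
          _ = L' j * δ * Bg j + Cm j * wg j k₂ := by ring
      have e2 : F x y - F x' y' =
          (∑ i, (lam i (x,y) * f i x - lam i (x',y') * f i x')) +
          (∑ j, (mu j (x,y) * g j y - mu j (x',y') * g j y')) := by
        simp only [hFdef, Finset.sum_sub_distrib]
        ring
      calc |F x y - F x' y'|
          ≤ |∑ i, (lam i (x,y) * f i x - lam i (x',y') * f i x')| +
            |∑ j, (mu j (x,y) * g j y - mu j (x',y') * g j y')| := by
            rw [e2]; exact abs_add_le _ _
        _ ≤ (∑ i, |lam i (x,y) * f i x - lam i (x',y') * f i x'|) +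
            (∑ j, |mu j (x,y) * g j y - mu j (x',y') * g j y'|) :=
            add_le_add (Finset.abs_sum_le_sum_abs _ _) (Finset.abs_sum_le_sum_abs _ _)
        _ ≤ W (k₁, k₂) := by
            rw [hWdef]
            exact add_le_add (Finset.sum_le_sum fun i _ => hterm1 i)
              (Finset.sum_le_sum fun j _ => hterm2 j)
    -- the covering finset in ℤ³
    set T3 : Finset (ℤ × ℤ × ℤ) := (A ×ˢ A).biUnion
      (fun p => {p.1} ×ˢ {p.2} ×ˢ Finset.Icc ⌊(z0 p - W p)/δ⌋ ⌊(z0 p + W p)/δ⌋) with hT3def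
    have hbase : ∀ k ∈ A, ((k:ℝ)*δ) ∈ Set.Icc (0:ℝ) 1 ∩ Set.Ico ((k:ℝ)*δ) (((k:ℝ)+1)*δ) := by
      intro k hk
      obtain ⟨h1, h2⟩ := hAmem k hk
      exact ⟨⟨h1, h2⟩, le_refl _, by nlinarith⟩
    have hS3sub : {k : ℤ × ℤ × ℤ |
        (Gr2 F ∩ (Set.Ico ((k.1 : ℝ) * δ) (((k.1 : ℝ) + 1) * δ) ×ˢ
          (Set.Ico ((k.2.1 : ℝ) * δ) (((k.2.1 : ℝ) + 1) * δ) ×ˢ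
           Set.Ico ((k.2.2 : ℝ) * δ) (((k.2.2 : ℝ) + 1) * δ)))).Nonempty} ⊆ (↑T3 : Set _) := by
      rintro ⟨k₁, k₂, k₃⟩ ⟨⟨x, y, z⟩, ⟨hx01, hy01, hz⟩, hxI, hyI, hzI⟩
      dsimp only at hx01 hy01 hz hxI hyI hzI
      simp only [Set.mem_Icc] at hx01 hy01
      have hk₁A : k₁ ∈ A := by
        simp only [hAdef, Finset.mem_Icc]
        have h := (mem_sq_iff hδ0).mp hxI
        constructor
        · rw [← h]; exact Int.floor_nonneg.mpr (div_nonneg hx01.1 hδ0.le)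
        · rw [← h]; exact Int.floor_le_floor (div_le_div_of_nonneg_right hx01.2 hδ0.le)
      have hk₂A : k₂ ∈ A := by
        simp only [hAdef, Finset.mem_Icc]
        have h := (mem_sq_iff hδ0).mp hyI
        constructor
        · rw [← h]; exact Int.floor_nonneg.mpr (div_nonneg hy01.1 hδ0.le)
        · rw [← h]; exact Int.floor_le_floor (div_le_div_of_nonneg_right hy01.2 hδ0.le)
      have hzW : |F x y - z0 (k₁, k₂)| ≤ W (k₁, k₂) :=
        hosc k₁ k₂ hk₁A hk₂A x y _ _ ⟨⟨hx01.1, hx01.2⟩, hxI⟩ ⟨⟨hy01.1, hy01.2⟩, hyI⟩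
          (hbase k₁ hk₁A) (hbase k₂ hk₂A)
      rw [abs_le] at hzW
      have hk₃ : ⌊z/δ⌋ = k₃ := (mem_sq_iff hδ0).mp hzI
      have hk₃mem : k₃ ∈ Finset.Icc ⌊(z0 (k₁,k₂) - W (k₁,k₂))/δ⌋ ⌊(z0 (k₁,k₂) + W (k₁,k₂))/δ⌋ := by
        rw [Finset.mem_Icc, ← hk₃]
        constructor
        · exact Int.floor_le_floor (div_le_div_of_nonneg_right (by rw [hz]; linarith [hzW.1]) hδ0.le)
        · exact Int.floor_le_floor (div_le_div_of_nonneg_right (by rw [hz]; linarith [hzW.2]) hδ0.le)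
      simp only [hT3def, Finset.coe_biUnion, Set.mem_iUnion, Finset.mem_coe,
        Finset.mem_product, Finset.mem_singleton]
      exact ⟨(k₁, k₂), ⟨hk₁A, hk₂A⟩, rfl, rfl, hk₃mem⟩
    have h1 : (meshCount3 δ (Gr2 F) : ℝ) ≤ (T3.card : ℝ) := by
      have h := Set.ncard_le_ncard hS3sub T3.finite_toSet
      rw [Set.ncard_coe_finset] at h
      have h' : meshCount3 δ (Gr2 F) ≤ T3.card := h
      exact_mod_cast h'
    have h2 : (T3.card : ℝ) ≤ ∑ p ∈ A ×ˢ A,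
        ((Finset.Icc ⌊(z0 p - W p)/δ⌋ ⌊(z0 p + W p)/δ⌋).card : ℝ) := by
      have h := Finset.card_biUnion_le (s := A ×ˢ A)
        (t := fun p => {p.1} ×ˢ {p.2} ×ˢ Finset.Icc ⌊(z0 p - W p)/δ⌋ ⌊(z0 p + W p)/δ⌋)
      have h' : T3.card ≤ ∑ p ∈ A ×ˢ A,
          (Finset.Icc ⌊(z0 p - W p)/δ⌋ ⌊(z0 p + W p)/δ⌋).card := by
        refine le_trans h (le_of_eq (Finset.sum_congr rfl fun p _ => ?_))
        simp [Finset.card_product]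
      exact_mod_cast h'
    have h3 : ∀ p ∈ A ×ˢ A,
        ((Finset.Icc ⌊(z0 p - W p)/δ⌋ ⌊(z0 p + W p)/δ⌋).card : ℝ) ≤ 2 * W p / δ + 2 := by
      intro p _
      rcases le_or_gt ⌊(z0 p - W p)/δ⌋ ⌊(z0 p + W p)/δ⌋ with hle | hlt
      · have hc : ((Finset.Icc ⌊(z0 p - W p)/δ⌋ ⌊(z0 p + W p)/δ⌋).card : ℤ) =
            ⌊(z0 p + W p)/δ⌋ + 1 - ⌊(z0 p - W p)/δ⌋ := by
          rw [Int.card_Icc]; omega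
        have hc' := congrArg (fun z : ℤ => (z:ℝ)) hc
        push_cast at hc'
        rw [hc']
        have l1 : ((⌊(z0 p + W p)/δ⌋:ℝ)) ≤ (z0 p + W p)/δ := Int.floor_le _
        have l2 : ((⌊(z0 p - W p)/δ⌋:ℝ)) > (z0 p - W p)/δ - 1 := by
          linarith [Int.lt_floor_add_one ((z0 p - W p)/δ)]
        have l3 : (z0 p + W p)/δ - (z0 p - W p)/δ = 2 * W p / δ := by ring
        linarith
      · rw [Finset.Icc_eq_empty (by omega), Finset.card_empty]
        have h0 : (0:ℝ) ≤ 2 * W p / δ := div_nonneg (by linarith [hW0 p]) hδ0.le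
        push_cast
        linarith
    -- per-square bound via column counts
    have h4 : ∀ p ∈ A ×ˢ A, 2 * W p / δ + 2 ≤
        G + ((∑ i, 2 * Cl i * nf i p.1) + (∑ j, 2 * Cm j * ng j p.2)) := by
      intro p hp
      obtain ⟨hp1, hp2⟩ := Finset.mem_product.mp hp
      obtain ⟨ha1, ha2⟩ := hAmem p.1 hp1
      obtain ⟨hb1, hb2⟩ := hAmem p.2 hp2
      have hWb : W p ≤ δ * ((∑ i, ((L i : ℝ) * Bf i + Cl i * nf i p.1)) +
          (∑ j, ((L' j : ℝ) * Bg j + Cm j * ng j p.2))) := by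
        rw [hWdef]
        dsimp only
        calc (∑ i, ((L i:ℝ) * δ * Bf i + Cl i * wf i p.1)) +
            (∑ j, ((L' j:ℝ) * δ * Bg j + Cm j * wg j p.2))
            ≤ (∑ i, (δ*((L i:ℝ) * Bf i) + δ*(Cl i * nf i p.1))) +
              (∑ j, (δ*((L' j:ℝ) * Bg j) + δ*(Cm j * ng j p.2))) := by
              apply add_le_add <;> apply Finset.sum_le_sum <;> intro t _
              · have hw := (hwfP t p.1 ha1 ha2).2.1
                have hc := hCl0 t
                have : Cl t * wf t p.1 ≤ Cl t * (δ * nf t p.1) :=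
                  mul_le_mul_of_nonneg_left (by exact_mod_cast hw) hc
                nlinarith
              · have hw := (hwgP t p.2 hb1 hb2).2.1
                have hc := hCm0 t
                have : Cm t * wg t p.2 ≤ Cm t * (δ * ng t p.2) :=
                  mul_le_mul_of_nonneg_left (by exact_mod_cast hw) hc
                nlinarith
          _ = δ * ((∑ i, ((L i : ℝ) * Bf i + Cl i * nf i p.1)) +
              (∑ j, ((L' j : ℝ) * Bg j + Cm j * ng j p.2))) := by
              rw [mul_add, Finset.mul_sum, Finset.mul_sum]
              exact congrArg₂ (· + ·) (Finset.sum_congr rfl fun i _ => by ring)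
                (Finset.sum_congr rfl fun j _ => by ring)
      have hdiv : 2 * W p / δ ≤ 2 * ((∑ i, ((L i : ℝ) * Bf i + Cl i * nf i p.1)) +
          (∑ j, ((L' j : ℝ) * Bg j + Cm j * ng j p.2))) := by
        rw [div_le_iff₀ hδ0]
        nlinarith [hWb]
      have hexp : 2 * ((∑ i, ((L i:ℝ) * Bf i + Cl i * nf i p.1)) +
          (∑ j, ((L' j:ℝ) * Bg j + Cm j * ng j p.2))) + 2
          = G + ((∑ i, 2 * Cl i * nf i p.1) + (∑ j, 2 * Cm j * ng j p.2)) := by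
        rw [hGdef]
        rw [Finset.sum_add_distrib, Finset.sum_add_distrib]
        have e1 : (∑ i, 2 * (L i:ℝ) * Bf i) = 2 * ∑ i, (L i:ℝ) * Bf i := by
          rw [Finset.mul_sum]; exact Finset.sum_congr rfl fun i _ => by ring
        have e2 : (∑ j, 2 * (L' j:ℝ) * Bg j) = 2 * ∑ j, (L' j:ℝ) * Bg j := by
          rw [Finset.mul_sum]; exact Finset.sum_congr rfl fun j _ => by ring
        have e3 : (∑ i, 2 * Cl i * nf i p.1) = 2 * ∑ i, Cl i * nf i p.1 := by
          rw [Finset.mul_sum]; exact Finset.sum_congr rfl fun i _ => by ring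
        have e4 : (∑ j, 2 * Cm j * ng j p.2) = 2 * ∑ j, Cm j * ng j p.2 := by
          rw [Finset.mul_sum]; exact Finset.sum_congr rfl fun j _ => by ring
        rw [e1, e2, e3, e4]
        ring
      linarith [hdiv]
    -- column count sums
    have hsum1 : ∀ i, ∑ k ∈ A, nf i k ≤ P := by
      intro i
      have h := sum2_le hδ0 (hBf i)
      have h' : ∑ k ∈ A, nf i k ≤ (meshCount2 δ (Gr1 (f i)) : ℝ) := by
        simp only [hnfdef, hAdef]
        exact_mod_cast h
      exact le_trans h' (hmc2P i)
    have hsum2 : ∀ j, ∑ k ∈ A, ng j k ≤ P := by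
      intro j
      have h := sum2_le hδ0 (hBg j)
      have h' : ∑ k ∈ A, ng j k ≤ (meshCount2 δ (Gr1 (g j)) : ℝ) := by
        simp only [hngdef, hAdef]
        exact_mod_cast h
      exact le_trans h' (hmc2Pg j)
    have hcardA : (A.card : ℝ) ≤ 2/δ := by
      rw [hAdef, cardA_eq hδ0]
      have l1 : (⌊1/δ⌋:ℝ) ≤ 1/δ := Int.floor_le _
      have l2 : (1:ℝ) ≤ 1/δ := by rw [le_div_iff₀ hδ0]; linarith
      have l3 : (2:ℝ)/δ = 1/δ + 1/δ := by ring
      linarith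
    have hδP : (1:ℝ)/δ ≤ P := by
      rw [hPdef]
      calc (1:ℝ)/δ = Real.exp (Real.log (1/δ)) := (Real.exp_log (by positivity)).symm
        _ = Real.exp (-Real.log δ) := by rw [one_div, Real.log_inv]
        _ ≤ _ := Real.exp_le_exp.mpr (by nlinarith)
    have hcardP : (A.card : ℝ) ≤ 2*P := by
      have l3 : (2:ℝ)/δ = 2*(1/δ) := by ring
      linarith
    -- assemble
    have hb1 : ∑ k ∈ A, (∑ i, 2 * Cl i * nf i k) ≤ (∑ i, 2 * Cl i) * P := by
      rw [Finset.sum_comm]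
      calc ∑ i, ∑ k ∈ A, 2 * Cl i * nf i k = ∑ i, 2 * Cl i * (∑ k ∈ A, nf i k) := by
            refine Finset.sum_congr rfl fun i _ => ?_; rw [Finset.mul_sum]
        _ ≤ ∑ i, 2 * Cl i * P := Finset.sum_le_sum fun i _ =>
            mul_le_mul_of_nonneg_left (hsum1 i) (by linarith [hCl0 i])
        _ = (∑ i, 2 * Cl i) * P := by rw [Finset.sum_mul]
    have hb2 : ∑ k ∈ A, (∑ j, 2 * Cm j * ng j k) ≤ (∑ j, 2 * Cm j) * P := by
      rw [Finset.sum_comm]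
      calc ∑ j, ∑ k ∈ A, 2 * Cm j * ng j k = ∑ j, 2 * Cm j * (∑ k ∈ A, ng j k) := by
            refine Finset.sum_congr rfl fun j _ => ?_; rw [Finset.mul_sum]
        _ ≤ ∑ j, 2 * Cm j * P := Finset.sum_le_sum fun j _ =>
            mul_le_mul_of_nonneg_left (hsum2 j) (by linarith [hCm0 j])
        _ = (∑ j, 2 * Cm j) * P := by rw [Finset.sum_mul]
    have h5 : (meshCount3 δ (Gr2 F) : ℝ) ≤
        (A.card:ℝ) * (A.card:ℝ) * G + ((A.card:ℝ) * ((∑ i, 2 * Cl i) * P) +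
          (A.card:ℝ) * ((∑ j, 2 * Cm j) * P)) := by
      calc (meshCount3 δ (Gr2 F) : ℝ)
          ≤ ∑ p ∈ A ×ˢ A, ((Finset.Icc ⌊(z0 p - W p)/δ⌋ ⌊(z0 p + W p)/δ⌋).card : ℝ) :=
            le_trans h1 h2
        _ ≤ ∑ p ∈ A ×ˢ A, (G + ((∑ i, 2 * Cl i * nf i p.1) + (∑ j, 2 * Cm j * ng j p.2))) :=
            Finset.sum_le_sum fun p hp => le_trans (h3 p hp) (h4 p hp)
        _ = ∑ k₁ ∈ A, ∑ k₂ ∈ A, (G + ((∑ i, 2 * Cl i * nf i k₁) + (∑ j, 2 * Cm j * ng j k₂))) := by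
            rw [Finset.sum_product]
        _ = (A.card:ℝ) * (A.card:ℝ) * G + ((A.card:ℝ) * (∑ k₁ ∈ A, (∑ i, 2 * Cl i * nf i k₁)) +
            (A.card:ℝ) * (∑ k₂ ∈ A, (∑ j, 2 * Cm j * ng j k₂))) := by
            simp only [Finset.sum_add_distrib, Finset.sum_const, nsmul_eq_mul, ← Finset.mul_sum]
            ring
        _ ≤ _ := by
            have hc0 : (0:ℝ) ≤ (A.card:ℝ) := Nat.cast_nonneg _
            exact add_le_add le_rfl (add_le_add (mul_le_mul_of_nonneg_left hb1 hc0)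
              (mul_le_mul_of_nonneg_left hb2 hc0))
    have h7 : (meshCount3 δ (Gr2 F) : ℝ) ≤ (K/δ) * P := by
      have e1 : (A.card:ℝ)*(A.card:ℝ)*G ≤ (2/δ)*(2*P)*G := by
        have hc0 : (0:ℝ) ≤ (A.card:ℝ) := Nat.cast_nonneg _
        have := mul_le_mul hcardA hcardP hc0 (by positivity)
        nlinarith
      have e2 : (A.card:ℝ) * ((∑ i, 2 * Cl i) * P) + (A.card:ℝ) * ((∑ j, 2 * Cm j) * P) ≤
          (2/δ) * (Ct * P) := by
        have hsums : (∑ i, 2 * Cl i) * P + (∑ j, 2 * Cm j) * P = Ct * P := by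
          rw [hCtdef]; ring
        have hc1 : (0:ℝ) ≤ (∑ i, 2 * Cl i) * P :=
          mul_nonneg (Finset.sum_nonneg fun i _ => by linarith [hCl0 i]) (by linarith)
        have hc2 : (0:ℝ) ≤ (∑ j, 2 * Cm j) * P :=
          mul_nonneg (Finset.sum_nonneg fun j _ => by linarith [hCm0 j]) (by linarith)
        calc (A.card:ℝ) * ((∑ i, 2 * Cl i) * P) + (A.card:ℝ) * ((∑ j, 2 * Cm j) * P)
            = (A.card:ℝ) * ((∑ i, 2 * Cl i) * P + (∑ j, 2 * Cm j) * P) := by ring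
          _ ≤ (2/δ) * ((∑ i, 2 * Cl i) * P + (∑ j, 2 * Cm j) * P) :=
              mul_le_mul_of_nonneg_right hcardA (by linarith)
          _ = (2/δ) * (Ct * P) := by rw [hsums]
      have efin : (2/δ)*(2*P)*G + (2/δ)*(Ct*P) = (K/δ) * P := by
        rw [hKdef]; ring
      exact le_trans h5 (le_trans (add_le_add e1 e2) (le_of_eq efin))
    -- take logs
    have hR1 : (1:ℝ) ≤ K/δ*P := by
      have h1δ : (1:ℝ) ≤ 1/δ := by rw [le_div_iff₀ hδ0]; linarith
      have t1 : (8:ℝ) ≤ K/δ := by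
        rw [div_eq_mul_inv, ← one_div]
        nlinarith
      have t2 := mul_le_mul t1 hP1 one_pos.le (by linarith)
      linarith
    have hlog3 : Real.log (meshCount3 δ (Gr2 F)) ≤ Real.log (K/δ*P) := by
      rcases Nat.eq_zero_or_pos (meshCount3 δ (Gr2 F)) with h|h
      · rw [h]; simpa using Real.log_nonneg hR1
      · exact Real.log_le_log (by exact_mod_cast h) h7
    have hlogR : Real.log (K/δ*P) = Real.log K - Real.log δ + (D+ε')*(-Real.log δ) := by
      have hKpos : (0:ℝ) < K := by linarith
      have hPpos : (0:ℝ) < P := by linarith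
      rw [Real.log_mul (ne_of_gt (div_pos hKpos hδ0)) (ne_of_gt hPpos),
        Real.log_div (ne_of_gt hKpos) (ne_of_gt hδ0), hPdef, Real.log_exp]
    rw [div_le_iff₀ hlog]
    calc Real.log (meshCount3 δ (Gr2 F)) ≤ Real.log (K/δ*P) := hlog3
      _ = Real.log K - Real.log δ + (D+ε')*(-Real.log δ) := hlogR
      _ ≤ ε'*(-Real.log δ) + (-Real.log δ) + (D+ε')*(-Real.log δ) := by linarith [hE4]
      _ = (1 + D + ε)*(-Real.log δ) := by rw [hε'def]; ring
  have hnonneg : ∀ᶠ δ in 𝓝[>] (0:ℝ),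
      (0:ℝ) ≤ Real.log (meshCount3 δ (Gr2 F)) / (-Real.log δ) := by
    filter_upwards [E1] with δ hδIoo
    have hlog : 0 < -Real.log δ := by
      have := Real.log_neg hδIoo.1 hδIoo.2; linarith
    apply div_nonneg ?_ hlog.le
    rcases Nat.eq_zero_or_pos (meshCount3 δ (Gr2 F)) with h|h
    · rw [h]; simp
    · exact Real.log_nonneg (by exact_mod_cast h)
  have hcob : IsCoboundedUnder (· ≤ ·) (𝓝[>] (0:ℝ))
      (fun δ => Real.log (meshCount3 δ (Gr2 F)) / (-Real.log δ)) :=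
    isCoboundedUnder_le_of_eventually_le _ hnonneg
  exact limsup_le_of_le hcob hcore
end

section
/- (Oscillation bound for products) Let f : [0,1] → R be continuous with M_f = max_{x∈[0,1]} |f(x)|, and let λ : [0,1] → R be Lipschitz with constant L_λ, c_{λ₁} = min_{[0,1]}|λ| and c_{λ₂} = max_{[0,1]}|λ|. Divide [0,1] into n equal subintervals I_i. Then for every i, the maximum variation of the product λf on I_i satisfies c_{λ₁} R_f[I_i] − (L_λ/n) M_f ≤ R_{λf}[I_i] ≤ c_{λ₂} R_f[I_i] + (L_λ/n) M_f. -/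
open Set

/-- Maximum variation `R_f[D]` of `f : ℝ → ℝ` on `D ⊆ ℝ`. -/
noncomputable def maxVar (f : ℝ → ℝ) (D : Set ℝ) : ℝ :=
  sSup {d : ℝ | ∃ u ∈ D, ∃ v ∈ D, d = |f u - f v|}

/-- **Oscillation bound for products.** For continuous `f : [0,1] → ℝ` and Lipschitz
`λ : [0,1] → ℝ` with constant `L_λ`, on every subinterval `I_i = [(i−1)/n, i/n]`:
`c_{λ₁} R_f[I_i] − (L_λ/n) M_f ≤ R_{λf}[I_i] ≤ c_{λ₂} R_f[I_i] + (L_λ/n) M_f`. -/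
theorem stmt17 (f lam : ℝ → ℝ) (hf : ContinuousOn f (Icc 0 1))
    (Llam : ℝ) (hLlam : 0 ≤ Llam)
    (hlip : ∀ u ∈ Icc (0:ℝ) 1, ∀ v ∈ Icc (0:ℝ) 1, |lam u - lam v| ≤ Llam * |u - v|)
    (Mf c1 c2 : ℝ)
    (hMf : Mf = sSup ((fun x => |f x|) '' Icc 0 1))
    (hc1 : c1 = sInf ((fun x => |lam x|) '' Icc 0 1))
    (hc2 : c2 = sSup ((fun x => |lam x|) '' Icc 0 1))
    (n : ℕ) (hn : 0 < n) (i : ℕ) (hi1 : 1 ≤ i) (hin : i ≤ n) :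
    c1 * maxVar f (Icc (((i : ℝ) - 1) / n) ((i : ℝ) / n)) - Llam / n * Mf ≤
        maxVar (fun x => lam x * f x) (Icc (((i : ℝ) - 1) / n) ((i : ℝ) / n)) ∧
      maxVar (fun x => lam x * f x) (Icc (((i : ℝ) - 1) / n) ((i : ℝ) / n)) ≤
        c2 * maxVar f (Icc (((i : ℝ) - 1) / n) ((i : ℝ) / n)) + Llam / n * Mf := by
  have hn' : (0:ℝ) < n := by exact_mod_cast hn
  set a : ℝ := ((i : ℝ) - 1) / n with ha_def
  set b : ℝ := (i : ℝ) / n with hb_def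
  have hi1' : (1:ℝ) ≤ (i:ℝ) := by exact_mod_cast hi1
  have hin' : (i:ℝ) ≤ (n:ℝ) := by exact_mod_cast hin
  have ha0 : 0 ≤ a := by
    apply div_nonneg _ hn'.le; linarith
  have hb1 : b ≤ 1 := by
    rw [hb_def, div_le_one hn']; exact hin'
  have hab : a ≤ b := by
    rw [ha_def, hb_def]; gcongr; linarith
  have hDsub : Icc a b ⊆ Icc 0 1 := Icc_subset_Icc ha0 hb1
  have hDne : a ∈ Icc a b := ⟨le_refl a, hab⟩
  -- distance bound on the subinterval
  have hdist : ∀ u ∈ Icc a b, ∀ v ∈ Icc a b, |u - v| ≤ 1 / n := by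
    intro u hu v hv
    have hba : b - a = 1 / n := by
      rw [ha_def, hb_def, div_sub_div_same]; ring_nf
    rw [← hba]
    rw [abs_sub_le_iff]
    constructor <;> [linarith [hu.1, hu.2, hv.1, hv.2]; linarith [hu.1, hu.2, hv.1, hv.2]]
  -- bounds from Mf, c1, c2
  have hIne : ((fun x => |f x|) '' Icc (0:ℝ) 1).Nonempty :=
    ⟨|f 0|, ⟨0, ⟨le_refl 0, zero_le_one⟩, rfl⟩⟩
  have hbddf : BddAbove ((fun x => |f x|) '' Icc (0:ℝ) 1) :=
    (isCompact_Icc.image_of_continuousOn hf.abs).bddAbove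
  have hMf_le : ∀ x ∈ Icc (0:ℝ) 1, |f x| ≤ Mf := by
    intro x hx
    rw [hMf]; exact le_csSup hbddf ⟨x, hx, rfl⟩
  have hMf0 : 0 ≤ Mf := le_trans (abs_nonneg _) (hMf_le 0 ⟨le_refl 0, zero_le_one⟩)
  have hbddlam : BddAbove ((fun x => |lam x|) '' Icc (0:ℝ) 1) := by
    refine ⟨|lam 0| + Llam, ?_⟩
    rintro y ⟨x, hx, rfl⟩
    have := hlip x hx 0 ⟨le_refl 0, zero_le_one⟩
    have h1 : |x - 0| ≤ 1 := by
      rw [sub_zero, abs_of_nonneg hx.1]; exact hx.2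
    have h2 : |lam x| - |lam 0| ≤ |lam x - lam 0| := abs_sub_abs_le_abs_sub _ _
    nlinarith
  have hc2_le : ∀ x ∈ Icc (0:ℝ) 1, |lam x| ≤ c2 := by
    intro x hx
    rw [hc2]; exact le_csSup hbddlam ⟨x, hx, rfl⟩
  have hc2_0 : 0 ≤ c2 := le_trans (abs_nonneg _) (hc2_le 0 ⟨le_refl 0, zero_le_one⟩)
  have hc1_le : ∀ x ∈ Icc (0:ℝ) 1, c1 ≤ |lam x| := by
    intro x hx
    rw [hc1]
    exact csInf_le ⟨0, by rintro y ⟨z, _, rfl⟩; exact abs_nonneg _⟩ ⟨x, hx, rfl⟩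
  have hc1_0 : 0 ≤ c1 := by
    rw [hc1]
    refine le_csInf ⟨|lam 0|, ⟨0, ⟨le_refl 0, zero_le_one⟩, rfl⟩⟩ ?_
    rintro y ⟨z, _, rfl⟩; exact abs_nonneg _
  -- the two variation sets
  set Sf := {d : ℝ | ∃ u ∈ Icc a b, ∃ v ∈ Icc a b, d = |f u - f v|} with hSf_def
  set Sg := {d : ℝ | ∃ u ∈ Icc a b, ∃ v ∈ Icc a b, d = |lam u * f u - lam v * f v|}
    with hSg_def
  have hSf_ne : (0:ℝ) ∈ Sf := ⟨a, hDne, a, hDne, by simp⟩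
  have hSg_ne : (0:ℝ) ∈ Sg := ⟨a, hDne, a, hDne, by simp⟩
  have hSf_bdd : BddAbove Sf := by
    refine ⟨2 * Mf, ?_⟩
    rintro y ⟨u, hu, v, hv, rfl⟩
    have h1 := hMf_le u (hDsub hu)
    have h2 := hMf_le v (hDsub hv)
    calc |f u - f v| ≤ |f u| + |f v| := abs_sub _ _
      _ ≤ 2 * Mf := by linarith
  have hSg_bdd : BddAbove Sg := by
    refine ⟨2 * (c2 * Mf), ?_⟩
    rintro y ⟨u, hu, v, hv, rfl⟩
    have h1 := hMf_le u (hDsub hu)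
    have h2 := hMf_le v (hDsub hv)
    have h3 := hc2_le u (hDsub hu)
    have h4 := hc2_le v (hDsub hv)
    calc |lam u * f u - lam v * f v| ≤ |lam u * f u| + |lam v * f v| := abs_sub _ _
      _ = |lam u| * |f u| + |lam v| * |f v| := by rw [abs_mul, abs_mul]
      _ ≤ c2 * Mf + c2 * Mf := by
          have := abs_nonneg (f u); have := abs_nonneg (f v)
          have := abs_nonneg (lam u); have := abs_nonneg (lam v)
          nlinarith
      _ = 2 * (c2 * Mf) := by ring
  have hRf0 : 0 ≤ maxVar f (Icc a b) := le_csSup hSf_bdd hSf_ne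
  have hRg0 : 0 ≤ maxVar (fun x => lam x * f x) (Icc a b) := le_csSup hSg_bdd hSg_ne
  have hRf_mem : ∀ u ∈ Icc a b, ∀ v ∈ Icc a b, |f u - f v| ≤ maxVar f (Icc a b) := by
    intro u hu v hv
    exact le_csSup hSf_bdd ⟨u, hu, v, hv, rfl⟩
  have hRg_mem : ∀ u ∈ Icc a b, ∀ v ∈ Icc a b,
      |lam u * f u - lam v * f v| ≤ maxVar (fun x => lam x * f x) (Icc a b) := by
    intro u hu v hv
    exact le_csSup hSg_bdd ⟨u, hu, v, hv, rfl⟩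
  constructor
  · -- lower bound
    rw [sub_le_iff_le_add]
    rcases eq_or_lt_of_le hc1_0 with hc10 | hc1pos
    · rw [← hc10, zero_mul]
      have : 0 ≤ Llam / n * Mf := by positivity
      linarith
    · have key : ∀ u ∈ Icc a b, ∀ v ∈ Icc a b,
          c1 * |f u - f v| ≤ maxVar (fun x => lam x * f x) (Icc a b) + Llam / n * Mf := by
        intro u hu v hv
        have h1 : c1 ≤ |lam u| := hc1_le u (hDsub hu)
        have h2 : c1 * |f u - f v| ≤ |lam u| * |f u - f v| :=
          mul_le_mul_of_nonneg_right h1 (abs_nonneg _)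
        have h3 : |lam u| * |f u - f v| = |lam u * f u - lam u * f v| := by
          rw [← abs_mul]; ring_nf
        have h4 : |lam u * f u - lam u * f v| ≤
            |lam u * f u - lam v * f v| + |lam v - lam u| * |f v| := by
          calc |lam u * f u - lam u * f v|
              = |(lam u * f u - lam v * f v) + (lam v - lam u) * f v| := by ring_nf
            _ ≤ |lam u * f u - lam v * f v| + |(lam v - lam u) * f v| := abs_add_le _ _
            _ = |lam u * f u - lam v * f v| + |lam v - lam u| * |f v| := by rw [abs_mul]
        have h5 : |lam v - lam u| * |f v| ≤ Llam / n * Mf := by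
          have hl := hlip v (hDsub hv) u (hDsub hu)
          have hd := hdist v hv u hu
          have hfv := hMf_le v (hDsub hv)
          have hlu : |lam v - lam u| ≤ Llam / n := by
            calc |lam v - lam u| ≤ Llam * |v - u| := hl
              _ ≤ Llam * (1 / n) := by
                  apply mul_le_mul_of_nonneg_left hd hLlam
              _ = Llam / n := by ring
          exact mul_le_mul hlu hfv (abs_nonneg _) (div_nonneg hLlam hn'.le)
        have h6 := hRg_mem u hu v hv
        linarith
      have hRfle : maxVar f (Icc a b) ≤
          (maxVar (fun x => lam x * f x) (Icc a b) + Llam / n * Mf) / c1 := by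
        apply Real.sSup_le
        · rintro y ⟨u, hu, v, hv, rfl⟩
          rw [le_div_iff₀ hc1pos]
          have := key u hu v hv
          linarith [mul_comm c1 |f u - f v|]
        · apply div_nonneg _ hc1pos.le
          have : 0 ≤ Llam / n * Mf := by positivity
          linarith
      calc c1 * maxVar f (Icc a b)
          ≤ c1 * ((maxVar (fun x => lam x * f x) (Icc a b) + Llam / n * Mf) / c1) :=
            mul_le_mul_of_nonneg_left hRfle hc1pos.le
        _ = maxVar (fun x => lam x * f x) (Icc a b) + Llam / n * Mf := by
            field_simp
  · -- upper bound
    apply Real.sSup_le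
    · rintro y ⟨u, hu, v, hv, rfl⟩
      have h1 : |lam u * f u - lam v * f v| ≤
          |lam u| * |f u - f v| + |lam u - lam v| * |f v| := by
        calc |lam u * f u - lam v * f v|
            = |lam u * (f u - f v) + (lam u - lam v) * f v| := by ring_nf
          _ ≤ |lam u * (f u - f v)| + |(lam u - lam v) * f v| := abs_add_le _ _
          _ = |lam u| * |f u - f v| + |lam u - lam v| * |f v| := by rw [abs_mul, abs_mul]
      have h2 : |lam u| * |f u - f v| ≤ c2 * maxVar f (Icc a b) :=
        mul_le_mul (hc2_le u (hDsub hu)) (hRf_mem u hu v hv) (abs_nonneg _) hc2_0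
      have h3 : |lam u - lam v| * |f v| ≤ Llam / n * Mf := by
        have hl := hlip u (hDsub hu) v (hDsub hv)
        have hd := hdist u hu v hv
        have hfv := hMf_le v (hDsub hv)
        have hlu : |lam u - lam v| ≤ Llam / n := by
          calc |lam u - lam v| ≤ Llam * |u - v| := hl
            _ ≤ Llam * (1 / n) := mul_le_mul_of_nonneg_left hd hLlam
            _ = Llam / n := by ring
        exact mul_le_mul hlu hfv (abs_nonneg _) (div_nonneg hLlam hn'.le)
      linarith
    · have h0 : 0 ≤ Llam / n * Mf := by positivity
      linarith [mul_nonneg hc2_0 hRf0]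
end
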